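/- Let α, β ∈ (0,π) and φ, ξ ∈ [0,2π). With C_z := cos(z/2), S_z := sin(z/2), define unit vectors in ℂ²: u₀ = C_α|0⟩ + e^{iφ}S_α|1⟩, u₁ = −S_α|0⟩ + e^{iφ}C_α|1⟩, v₀ = C_β|0⟩ + e^{iξ}S_β|1⟩, v₁ = −S_β|0⟩ + e^{iξ}C_β|1⟩. Then the vector ψ_Hardy := (T_α·u₀⊗v₁ + T_β·u₁⊗v₀ + u₁⊗v₁)/√(1+T_α²+T_β²) (where T_z := tan(z/2)) is a unit vector in ℂ²⊗ℂ² orthogonal to each of the three vectors |0⟩⊗v₁, u₁⊗|0⟩, and u₀⊗v₀; moreover, every vector of ℂ²⊗ℂ² orthogonal to all three of these vectors is a complex scalar multiple of ψ_Hardy. -/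

import Mathlib

open Real Complex

set_option maxHeartbeats 1000000

noncomputable section

/-- Computational basis vector `|0⟩` of a qubit. -/
def ket0 : EuclideanSpace ℂ (Fin 2) := WithLp.toLp 2 fun i => if i = 0 then 1 else 0

/-- Computational basis vector `|1⟩` of a qubit. -/
def ket1 : EuclideanSpace ℂ (Fin 2) := WithLp.toLp 2 fun i => if i = 1 then 1 else 0

/-- Tensor product of two qubit vectors, as a vector in `ℂ²⊗ℂ² ≅ ℂ⁴`. -/
def tensor (u v : EuclideanSpace ℂ (Fin 2)) : EuclideanSpace ℂ (Fin 2 × Fin 2) :=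
  WithLp.toLp 2 fun p => u p.1 * v p.2

theorem hardy_state_unit_orthogonal_unique
    (α β φ ξ : ℝ) (hα : α ∈ Set.Ioo 0 π) (hβ : β ∈ Set.Ioo 0 π)
    (hφ : φ ∈ Set.Ico 0 (2 * π)) (hξ : ξ ∈ Set.Ico 0 (2 * π))
    (u0 u1 v0 v1 : EuclideanSpace ℂ (Fin 2))
    (hu0 : u0 = (Real.cos (α / 2) : ℂ) • ket0 + (Complex.exp (Complex.I * φ) * Real.sin (α / 2)) • ket1)
    (hu1 : u1 = (-(Real.sin (α / 2) : ℂ)) • ket0 + (Complex.exp (Complex.I * φ) * Real.cos (α / 2)) • ket1)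
    (hv0 : v0 = (Real.cos (β / 2) : ℂ) • ket0 + (Complex.exp (Complex.I * ξ) * Real.sin (β / 2)) • ket1)
    (hv1 : v1 = (-(Real.sin (β / 2) : ℂ)) • ket0 + (Complex.exp (Complex.I * ξ) * Real.cos (β / 2)) • ket1)
    (ψ : EuclideanSpace ℂ (Fin 2 × Fin 2))
    (hψ : ψ = ((Real.sqrt (1 + Real.tan (α / 2) ^ 2 + Real.tan (β / 2) ^ 2) : ℂ))⁻¹ •
        ((Real.tan (α / 2) : ℂ) • tensor u0 v1 + (Real.tan (β / 2) : ℂ) • tensor u1 v0 +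
          tensor u1 v1)) :
    ‖ψ‖ = 1 ∧
    inner ℂ (tensor ket0 v1) ψ = (0 : ℂ) ∧
    inner ℂ (tensor u1 ket0) ψ = (0 : ℂ) ∧
    inner ℂ (tensor u0 v0) ψ = (0 : ℂ) ∧
    (∀ w : EuclideanSpace ℂ (Fin 2 × Fin 2),
      inner ℂ (tensor ket0 v1) w = (0 : ℂ) →
      inner ℂ (tensor u1 ket0) w = (0 : ℂ) →
      inner ℂ (tensor u0 v0) w = (0 : ℂ) →
      ∃ c : ℂ, w = c • ψ) := by
  obtain ⟨hα1, hα2⟩ := hα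
  obtain ⟨hβ1, hβ2⟩ := hβ
  have haR : 0 < Real.cos (α/2) := Real.cos_pos_of_mem_Ioo ⟨by linarith [Real.pi_pos], by linarith⟩
  have hbR : 0 < Real.cos (β/2) := Real.cos_pos_of_mem_Ioo ⟨by linarith [Real.pi_pos], by linarith⟩
  have hsNR : (0:ℝ) < Real.sqrt (1 + Real.tan (α / 2) ^ 2 + Real.tan (β / 2) ^ 2) :=
    Real.sqrt_pos.mpr (by positivity)
  -- abbreviations
  set A := ((Real.tan (α/2) : ℝ) : ℂ) with hAdef
  set B := ((Real.tan (β/2) : ℝ) : ℂ) with hBdef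
  set a := ((Real.cos (α/2) : ℝ) : ℂ) with hadef
  set b := ((Real.cos (β/2) : ℝ) : ℂ) with hbdef
  set S := ((Real.sqrt (1 + Real.tan (α / 2) ^ 2 + Real.tan (β / 2) ^ 2) : ℝ) : ℂ) with hSdef
  set E := Complex.exp (Complex.I * φ) with hEdef
  set F := Complex.exp (Complex.I * ξ) with hFdef
  set E' := Complex.exp (-(Complex.I * φ)) with hE'def
  set F' := Complex.exp (-(Complex.I * ξ)) with hF'def
  -- basic complex identities
  have hsaC : ((Real.sin (α/2) : ℝ) : ℂ) = A * a := by
    rw [hAdef, hadef]; exact_mod_cast (Real.tan_mul_cos haR.ne').symm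
  have hsbC : ((Real.sin (β/2) : ℝ) : ℂ) = B * b := by
    rw [hBdef, hbdef]; exact_mod_cast (Real.tan_mul_cos hbR.ne').symm
  have hc1 : (starRingEnd ℂ) E = E' := by
    rw [hEdef, hE'def, ← Complex.exp_conj]; congr 1; simp [Complex.conj_I]
  have hc2 : (starRingEnd ℂ) F = F' := by
    rw [hFdef, hF'def, ← Complex.exp_conj]; congr 1; simp [Complex.conj_I]
  have hcA : (starRingEnd ℂ) A = A := by rw [hAdef]; exact Complex.conj_ofReal _
  have hcB : (starRingEnd ℂ) B = B := by rw [hBdef]; exact Complex.conj_ofReal _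
  have hca : (starRingEnd ℂ) a = a := by rw [hadef]; exact Complex.conj_ofReal _
  have hcb : (starRingEnd ℂ) b = b := by rw [hbdef]; exact Complex.conj_ofReal _
  have hcS : (starRingEnd ℂ) S = S := by rw [hSdef]; exact Complex.conj_ofReal _
  have hE1 : E * E' = 1 := by
    rw [hEdef, hE'def, ← Complex.exp_add]; simp
  have hF1 : F * F' = 1 := by
    rw [hFdef, hF'def, ← Complex.exp_add]; simp
  have hS0 : S ≠ 0 := by rw [hSdef]; exact_mod_cast hsNR.ne'
  have ha0 : a ≠ 0 := by rw [hadef]; exact_mod_cast haR.ne'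
  have hb0 : b ≠ 0 := by rw [hbdef]; exact_mod_cast hbR.ne'
  have hS1 : S * S⁻¹ = 1 := mul_inv_cancel₀ hS0
  have ha1 : a * a⁻¹ = 1 := mul_inv_cancel₀ ha0
  have hb1 : b * b⁻¹ = 1 := mul_inv_cancel₀ hb0
  have hs2 : S ^ 2 = 1 + A ^ 2 + B ^ 2 := by
    rw [hSdef, hAdef, hBdef, ← Complex.ofReal_pow, Real.sq_sqrt (by positivity)]; push_cast; ring
  have hA : a ^ 2 * (1 + A ^ 2) = 1 := by
    rw [hadef, hAdef]
    have h : Real.cos (α/2)^2 * (1 + Real.tan (α/2)^2) = 1 := by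
      rw [Real.tan_eq_sin_div_cos]; field_simp; exact Real.cos_sq_add_sin_sq _
    exact_mod_cast h
  have hB : b ^ 2 * (1 + B ^ 2) = 1 := by
    rw [hbdef, hBdef]
    have h : Real.cos (β/2)^2 * (1 + Real.tan (β/2)^2) = 1 := by
      rw [Real.tan_eq_sin_div_cos]; field_simp; exact Real.cos_sq_add_sin_sq _
    exact_mod_cast h
  -- components of ψ
  have hψ00 : ψ (0,0) = S⁻¹ * (-(A * B * a * b)) := by
    simp only [hψ, hu0, hu1, hv0, hv1, PiLp.add_apply, PiLp.smul_apply, tensor, ket0, ket1, PiLp.toLp_apply,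
      smul_eq_mul, Fin.isValue, one_ne_zero, zero_ne_one, if_true, if_false, reduceIte, mul_one,
      mul_zero, zero_mul, one_mul, add_zero, zero_add, neg_zero, neg_neg]
    rw [hsaC, hsbC]; ring
  have hψ01 : ψ (0,1) = S⁻¹ * (-(F * A * B^2 * a * b)) := by
    simp only [hψ, hu0, hu1, hv0, hv1, PiLp.add_apply, PiLp.smul_apply, tensor, ket0, ket1, PiLp.toLp_apply,
      smul_eq_mul, Fin.isValue, one_ne_zero, zero_ne_one, if_true, if_false, reduceIte, mul_one,
      mul_zero, zero_mul, one_mul, add_zero, zero_add, neg_zero, neg_neg]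
    rw [hsaC, hsbC]; ring
  have hψ10 : ψ (1,0) = S⁻¹ * (-(E * A^2 * B * a * b)) := by
    simp only [hψ, hu0, hu1, hv0, hv1, PiLp.add_apply, PiLp.smul_apply, tensor, ket0, ket1, PiLp.toLp_apply,
      smul_eq_mul, Fin.isValue, one_ne_zero, zero_ne_one, if_true, if_false, reduceIte, mul_one,
      mul_zero, zero_mul, one_mul, add_zero, zero_add, neg_zero, neg_neg]
    rw [hsaC, hsbC]; ring
  have hψ11 : ψ (1,1) = S⁻¹ * (E * F * a * b * (1 + A^2 + B^2)) := by
    simp only [hψ, hu0, hu1, hv0, hv1, PiLp.add_apply, PiLp.smul_apply, tensor, ket0, ket1, PiLp.toLp_apply,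
      smul_eq_mul, Fin.isValue, one_ne_zero, zero_ne_one, if_true, if_false, reduceIte, mul_one,
      mul_zero, zero_mul, one_mul, add_zero, zero_add, neg_zero, neg_neg]
    rw [hsaC, hsbC]; ring
  -- norm
  have hinner : inner ℂ ψ ψ = 1 := by
    simp only [PiLp.inner_apply, RCLike.inner_apply, Fintype.sum_prod_type, Fin.sum_univ_two]
    rw [hψ00, hψ01, hψ10, hψ11]
    simp only [map_mul, map_neg, map_add, map_inv₀, map_one, map_pow, Complex.conj_ofReal,
      hc1, hc2, hcA, hcB, hca, hcb, hcS]
    linear_combination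
      (S⁻¹^2*a^2*b^2*(A^4*B^2 + F*F'*(1+A^2+B^2)^2)) * hE1 +
      (S⁻¹^2*a^2*b^2*(A^2*B^4 + (1+A^2+B^2)^2)) * hF1 +
      (S⁻¹^2*b^2*(1+A^2+B^2)*(1+B^2)) * hA +
      (S⁻¹^2*(1+A^2+B^2)) * hB -
      S⁻¹^2 * hs2 + (S*S⁻¹+1) * hS1
  refine ⟨?_, ?_, ?_, ?_, ?_⟩
  · rw [@norm_eq_sqrt_re_inner ℂ, hinner]
    simp
  · simp only [PiLp.inner_apply, RCLike.inner_apply, Fintype.sum_prod_type, Fin.sum_univ_two,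
      hv1, tensor, ket0, ket1, PiLp.toLp_apply, PiLp.add_apply, PiLp.smul_apply, smul_eq_mul, Fin.isValue,
      one_ne_zero, zero_ne_one, if_true, if_false, reduceIte, mul_one, mul_zero, zero_mul,
      one_mul, add_zero, zero_add, neg_zero, neg_neg, map_mul, map_neg, map_add, map_zero,
      map_one, map_inv₀, Complex.conj_ofReal, hc1, hc2, hcA, hcB, hca, hcb, hcS]
    rw [hψ00, hψ01, hsbC]
    linear_combination (-(S⁻¹*A*B^2*a*b^2)) * hF1
  · simp only [PiLp.inner_apply, RCLike.inner_apply, Fintype.sum_prod_type, Fin.sum_univ_two,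
      hu1, tensor, ket0, ket1, PiLp.toLp_apply, PiLp.add_apply, PiLp.smul_apply, smul_eq_mul, Fin.isValue,
      one_ne_zero, zero_ne_one, if_true, if_false, reduceIte, mul_one, mul_zero, zero_mul,
      one_mul, add_zero, zero_add, neg_zero, neg_neg, map_mul, map_neg, map_add, map_zero,
      map_one, map_inv₀, Complex.conj_ofReal, hc1, hc2, hcA, hcB, hca, hcb, hcS]
    rw [hψ00, hψ10, hsaC]
    linear_combination (-(S⁻¹*A^2*B*a^2*b)) * hE1
  · simp only [PiLp.inner_apply, RCLike.inner_apply, Fintype.sum_prod_type, Fin.sum_univ_two,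
      hu0, hv0, tensor, ket0, ket1, PiLp.toLp_apply, PiLp.add_apply, PiLp.smul_apply, smul_eq_mul, Fin.isValue,
      one_ne_zero, zero_ne_one, if_true, if_false, reduceIte, mul_one, mul_zero, zero_mul,
      one_mul, add_zero, zero_add, neg_zero, neg_neg, map_mul, map_neg, map_add, map_zero,
      map_one, map_inv₀, Complex.conj_ofReal, hc1, hc2, hcA, hcB, hca, hcb, hcS]
    rw [hψ00, hψ01, hψ10, hψ11, hsaC, hsbC]
    linear_combination
      (S⁻¹*A*B*a^2*b^2*(F*F'*(1+A^2+B^2) - A^2)) * hE1 +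
      (S⁻¹*A*B*a^2*b^2*((1+A^2+B^2) - B^2)) * hF1
  · intro w h1 h2 h3
    simp only [PiLp.inner_apply, RCLike.inner_apply, Fintype.sum_prod_type, Fin.sum_univ_two,
      hv1, tensor, ket0, ket1, PiLp.toLp_apply, PiLp.add_apply, PiLp.smul_apply, smul_eq_mul, Fin.isValue,
      one_ne_zero, zero_ne_one, if_true, if_false, reduceIte, mul_one, mul_zero, zero_mul,
      one_mul, add_zero, zero_add, neg_zero, neg_neg, map_mul, map_neg, map_add, map_zero,
      map_one, map_inv₀, Complex.conj_ofReal, hc1, hc2, hcA, hcB, hca, hcb, hcS] at h1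
    simp only [PiLp.inner_apply, RCLike.inner_apply, Fintype.sum_prod_type, Fin.sum_univ_two,
      hu1, tensor, ket0, ket1, PiLp.toLp_apply, PiLp.add_apply, PiLp.smul_apply, smul_eq_mul, Fin.isValue,
      one_ne_zero, zero_ne_one, if_true, if_false, reduceIte, mul_one, mul_zero, zero_mul,
      one_mul, add_zero, zero_add, neg_zero, neg_neg, map_mul, map_neg, map_add, map_zero,
      map_one, map_inv₀, Complex.conj_ofReal, hc1, hc2, hcA, hcB, hca, hcb, hcS] at h2
    simp only [PiLp.inner_apply, RCLike.inner_apply, Fintype.sum_prod_type, Fin.sum_univ_two,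
      hu0, hv0, tensor, ket0, ket1, PiLp.toLp_apply, PiLp.add_apply, PiLp.smul_apply, smul_eq_mul, Fin.isValue,
      one_ne_zero, zero_ne_one, if_true, if_false, reduceIte, mul_one, mul_zero, zero_mul,
      one_mul, add_zero, zero_add, neg_zero, neg_neg, map_mul, map_neg, map_add, map_zero,
      map_one, map_inv₀, Complex.conj_ofReal, hc1, hc2, hcA, hcB, hca, hcb, hcS] at h3
    rw [hsaC] at h2 h3
    rw [hsbC] at h1 h3
    have hw01 : w (0,1) = F * B * w (0,0) := by
      linear_combination (F*b⁻¹)*h1 - w (0,1)*hF1 + (B*F*w (0,0) - F*F'*w (0,1))*hb1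
    have hw10 : w (1,0) = E * A * w (0,0) := by
      linear_combination (E*a⁻¹)*h2 - w (1,0)*hE1 + (A*E*w (0,0) - E*E'*w (1,0))*ha1
    have hw00P : w (0,0) * (1 + A^2 + B^2) = -(A*B*E'*F'*w (1,1)) := by
      linear_combination (a⁻¹*b⁻¹)*h3 - (a*a⁻¹*b*b⁻¹*B*F')*hw01 - (a*a⁻¹*b*b⁻¹*A*E')*hw10 -
        (a*a⁻¹*b*b⁻¹*B^2*w (0,0))*hF1 - (a*a⁻¹*b*b⁻¹*A^2*w (0,0))*hE1 -
        (b*b⁻¹*(w (0,0)*(1+A^2+B^2) + A*B*E'*F'*w (1,1)))*ha1 -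
        (w (0,0)*(1+A^2+B^2) + A*B*E'*F'*w (1,1))*hb1
    have hw00v : w (0,0) = -(A*B*E'*F'*w (1,1)) * S⁻¹^2 := by
      linear_combination S⁻¹^2*hw00P + (w (0,0)*S⁻¹^2)*hs2 - (w (0,0)*(S*S⁻¹+1))*hS1
    refine ⟨E' * F' * w (1,1) * S⁻¹ * a⁻¹ * b⁻¹, ?_⟩
    have key : ∀ p : Fin 2 × Fin 2, w p = (E' * F' * w (1,1) * S⁻¹ * a⁻¹ * b⁻¹) * ψ p := by
      rintro ⟨i, j⟩
      fin_cases i <;> fin_cases j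
      · show w (0,0) = E' * F' * w (1,1) * S⁻¹ * a⁻¹ * b⁻¹ * ψ (0,0)
        rw [hψ00]
        linear_combination hw00v + (E'*F'*A*B*w (1,1)*S⁻¹^2*b*b⁻¹)*ha1 +
          (E'*F'*A*B*w (1,1)*S⁻¹^2)*hb1
      · show w (0,1) = E' * F' * w (1,1) * S⁻¹ * a⁻¹ * b⁻¹ * ψ (0,1)
        rw [hψ01]
        linear_combination hw01 + (F*B)*hw00v + (E'*F*F'*A*B^2*w (1,1)*S⁻¹^2*b*b⁻¹)*ha1 +
          (E'*F*F'*A*B^2*w (1,1)*S⁻¹^2)*hb1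
      · show w (1,0) = E' * F' * w (1,1) * S⁻¹ * a⁻¹ * b⁻¹ * ψ (1,0)
        rw [hψ10]
        linear_combination hw10 + (E*A)*hw00v + (E*E'*F'*A^2*B*w (1,1)*S⁻¹^2*b*b⁻¹)*ha1 +
          (E*E'*F'*A^2*B*w (1,1)*S⁻¹^2)*hb1
      · show w (1,1) = E' * F' * w (1,1) * S⁻¹ * a⁻¹ * b⁻¹ * ψ (1,1)
        rw [hψ11]
        linear_combination
          (-(F*F'*w (1,1)*S⁻¹^2*(1+A^2+B^2)*a*a⁻¹*b*b⁻¹))*hE1 -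
          (w (1,1)*S⁻¹^2*(1+A^2+B^2)*a*a⁻¹*b*b⁻¹)*hF1 -
          (w (1,1)*S⁻¹^2*(1+A^2+B^2)*b*b⁻¹)*ha1 -
          (w (1,1)*S⁻¹^2*(1+A^2+B^2))*hb1 +
          (w (1,1)*S⁻¹^2)*hs2 - (w (1,1)*(S*S⁻¹+1))*hS1
    ext p
    rw [PiLp.smul_apply, smul_eq_mul]
    exact key p


end
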